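/- Let H be a separable complex Hilbert space and let x, y : ℤ → H form a pair of dual Riesz bases for H. Then the family consisting of (n ↦ x_{2n}) together with (n ↦ x_{2n+1} − x_{2n}) is a Riesz basis for H whose dual Riesz basis is (n ↦ y_{2n} + y_{2n+1}) together with (n ↦ y_{2n+1}); in particular, for every F ∈ H the family over (k,n) ∈ Fin 2 × ℤ whose terms are ⟨F, x_{2n}⟩(y_{2n} + y_{2n+1}) for k = 0 and ⟨F, x_{2n+1} − x_{2n}⟩ y_{2n+1} for k = 1 has sum F (unconditional convergence in H). -/

import Mathlib

noncomputable section
open scoped Classical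

local notation "⟪" f ", " g "⟫" => @inner ℂ _ _ g f

/-- A family `x : ι → H` is a Riesz basis for `H` if it is the image of a Hilbert
(orthonormal) basis of `H` under a continuous linear equivalence of `H`. -/
def IsRieszBasis {H : Type*} [NormedAddCommGroup H] [InnerProductSpace ℂ H]
    {ι : Type*} (x : ι → H) : Prop :=
  ∃ (e : HilbertBasis ι ℂ H) (T : H ≃L[ℂ] H), ∀ i, x i = T (e i)

/-- Families `x, y : ι → H` form a pair of dual Riesz bases: both are Riesz bases,
they are biorthogonal, and `∑ᵢ ⟨f, yᵢ⟩ xᵢ = f` for every `f` (inner product linear in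
the first argument, conjugate-linear in the second). -/
def IsDualRieszBasisPair {H : Type*} [NormedAddCommGroup H] [InnerProductSpace ℂ H]
    {ι : Type*} (x y : ι → H) : Prop :=
  IsRieszBasis x ∧ IsRieszBasis y ∧
    (∀ i j, ⟪x i, y j⟫ = if i = j then (1 : ℂ) else 0) ∧
    ∀ f : H, HasSum (fun i => ⟪f, y i⟫ • x i) f

section Aux

variable {H : Type*} [NormedAddCommGroup H] [InnerProductSpace ℂ H] [CompleteSpace H]
variable {ι κ : Type*}

/-- Reindex a Hilbert basis along an equivalence of index types. -/
def rieszReindex (b : HilbertBasis ι ℂ H) (σ : κ ≃ ι) : HilbertBasis κ ℂ H :=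
  HilbertBasis.mk (b.orthonormal.comp σ σ.injective)
    (by
      have hr : Set.range (⇑b ∘ ⇑σ) = Set.range ⇑b := σ.surjective.range_comp _
      show ⊤ ≤ (Submodule.span ℂ (Set.range (⇑b ∘ ⇑σ))).topologicalClosure
      rw [hr, b.dense_span])

@[simp] lemma rieszReindex_apply (b : HilbertBasis ι ℂ H) (σ : κ ≃ ι) (k : κ) :
    rieszReindex b σ k = b (σ k) :=
  congrFun (HilbertBasis.coe_mk _ _) k

lemma basis_ext_inner (b : HilbertBasis ι ℂ H) {u v : H}
    (h : ∀ i, (@inner ℂ _ _ (b i) u) = @inner ℂ _ _ (b i) v) : u = v := by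
  have h1 := b.hasSum_repr u
  have h2 := b.hasSum_repr v
  have he : (fun i => b.repr u i • b i) = fun i => b.repr v i • b i := by
    funext i
    rw [b.repr_apply_apply, b.repr_apply_apply, h]
  rw [he] at h1
  exact h1.unique h2

lemma clm_ext_basis (b : HilbertBasis ι ℂ H) {f g : H →L[ℂ] H}
    (h : ∀ i, f (b i) = g (b i)) (v : H) : f v = g v := by
  have h1 := (b.hasSum_repr v).mapL f
  have h2 := (b.hasSum_repr v).mapL g
  have he : (fun i => f (b.repr v i • b i)) = fun i => g (b.repr v i • b i) := by
    funext i
    rw [map_smul, map_smul, h]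
  rw [he] at h1
  exact h1.unique h2

lemma riesz_engine [CompleteSpace H] (E : HilbertBasis ι ℂ H) (G D : H ≃L[ℂ] H)
    (h : ∀ f, G (ContinuousLinearMap.adjoint (D : H →L[ℂ] H) f) = f) (f : H) :
    HasSum (fun i => (@inner ℂ _ _ (D (E i)) f) • G (E i)) f := by
  set u := ContinuousLinearMap.adjoint (D : H →L[ℂ] H) f with hu
  have h1 := (E.hasSum_repr u).mapL (G : H →L[ℂ] H)
  have he : (fun i => (G : H →L[ℂ] H) (E.repr u i • E i))
      = fun i => (@inner ℂ _ _ (D (E i)) f) • G (E i) := by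
    funext i
    rw [map_smul]
    have hcoef : E.repr u i = @inner ℂ _ _ (D (E i)) f := by
      rw [E.repr_apply_apply, hu, ContinuousLinearMap.adjoint_inner_right]
      simp
    rw [hcoef]
    simp
  rw [he] at h1
  have h2 : (G : H →L[ℂ] H) u = f := by
    simpa using h f
  rwa [h2] at h1

end Aux

/-- The equivalence `Fin 2 × ℤ ≃ ℤ`, `(k, n) ↦ 2n + k`. -/
def finIntEquiv : Fin 2 × ℤ ≃ ℤ where
  toFun i := 2 * i.2 + (i.1 : ℤ)
  invFun m := (⟨(m % 2).toNat, by omega⟩, m / 2)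
  left_inv := by
    rintro ⟨k, n⟩
    fin_cases k <;>
      · refine Prod.ext (Fin.ext ?_) ?_ <;> simp <;> omega
  right_inv m := by
    refine (?_ : 2 * (m / 2) + (((m % 2).toNat : ℕ) : ℤ) = m)
    omega

@[simp] lemma finIntEquiv_apply (i : Fin 2 × ℤ) : finIntEquiv i = 2 * i.2 + (i.1 : ℤ) := rfl

set_option maxHeartbeats 2000000 in
theorem stmt11 {H : Type*} [NormedAddCommGroup H] [InnerProductSpace ℂ H]
    [CompleteSpace H] [TopologicalSpace.SeparableSpace H]
    (x y : ℤ → H) (hxy : IsDualRieszBasisPair x y)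
    (z w : Fin 2 × ℤ → H)
    (hz : ∀ i : Fin 2 × ℤ,
      z i = ![x (2 * i.2), x (2 * i.2 + 1) - x (2 * i.2)] i.1)
    (hw : ∀ i : Fin 2 × ℤ,
      w i = ![y (2 * i.2) + y (2 * i.2 + 1), y (2 * i.2 + 1)] i.1) :
    IsDualRieszBasisPair z w ∧
      ∀ F : H, HasSum (fun i : Fin 2 × ℤ => ⟪F, z i⟫ • w i) F := by
  obtain ⟨⟨e, T, hx0⟩, -, hb, -⟩ := hxy
  have hx : ∀ i, x i = T (e i) := hx0
  clear hx0
  -- the adjoint of T sends y j to e j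
  set Tc : H →L[ℂ] H := (T : H →L[ℂ] H) with hTc
  set Tsc : H →L[ℂ] H := (T.symm : H →L[ℂ] H) with hTsc
  have hTy : ∀ j, ContinuousLinearMap.adjoint Tc (y j) = e j := by
    intro j
    apply basis_ext_inner e
    intro i
    rw [ContinuousLinearMap.adjoint_inner_right]
    have h1 : Tc (e i) = x i := by rw [hTc]; simp [hx i]
    rw [h1, ← inner_conj_symm, hb i j, orthonormal_iff_ite.mp e.orthonormal i j,
      apply_ite (starRingEnd ℂ), map_one, map_zero]
    split_ifs <;> rfl
  have hTT : ∀ v, ContinuousLinearMap.adjoint Tsc (ContinuousLinearMap.adjoint Tc v) = v := by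
    intro v
    have h1 : Tc ∘L Tsc = ContinuousLinearMap.id ℂ H := by
      ext u; simp [hTc, hTsc]
    have h2 := congrArg ContinuousLinearMap.adjoint h1
    rw [ContinuousLinearMap.adjoint_comp, ContinuousLinearMap.adjoint_id] at h2
    exact ContinuousLinearMap.ext_iff.mp h2 v
  have hTT' : ∀ v, ContinuousLinearMap.adjoint Tc (ContinuousLinearMap.adjoint Tsc v) = v := by
    intro v
    have h1 : Tsc ∘L Tc = ContinuousLinearMap.id ℂ H := by
      ext u; simp [hTc, hTsc]
    have h2 := congrArg ContinuousLinearMap.adjoint h1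
    rw [ContinuousLinearMap.adjoint_comp, ContinuousLinearMap.adjoint_id] at h2
    exact ContinuousLinearMap.ext_iff.mp h2 v
  set B : H ≃L[ℂ] H := ContinuousLinearEquiv.equivOfInverse
    (ContinuousLinearMap.adjoint Tsc) (ContinuousLinearMap.adjoint Tc) hTT' hTT with hB
  have hBe : ∀ j, B (e j) = y j := by
    intro j
    rw [← hTy j]
    show ContinuousLinearMap.adjoint Tsc (ContinuousLinearMap.adjoint Tc (y j)) = y j
    exact hTT _
  -- the submodules spanned by odd resp. even basis vectors
  set Kodd : Submodule ℂ H :=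
    (Submodule.span ℂ (Set.range fun n : ℤ => e (2 * n + 1))).topologicalClosure with hKodd
  set Kev : Submodule ℂ H :=
    (Submodule.span ℂ (Set.range fun n : ℤ => e (2 * n))).topologicalClosure with hKev
  haveI : CompleteSpace Kodd := (Submodule.isClosed_topologicalClosure _).completeSpace_coe
  haveI : CompleteSpace Kev := (Submodule.isClosed_topologicalClosure _).completeSpace_coe
  have hmo : ∀ n : ℤ, e (2 * n + 1) ∈ Kodd := fun n =>
    Submodule.le_topologicalClosure _ (Submodule.subset_span ⟨n, rfl⟩)
  have hme : ∀ n : ℤ, e (2 * n) ∈ Kev := fun n =>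
    Submodule.le_topologicalClosure _ (Submodule.subset_span ⟨n, rfl⟩)
  have horth_o : ∀ n : ℤ, e (2 * n) ∈ Koddᗮ := by
    intro n
    have h1 : e (2 * n) ∈ (Submodule.span ℂ (Set.range fun n : ℤ => e (2 * n + 1)))ᗮ := by
      rw [Submodule.mem_orthogonal]
      intro u hu
      induction hu using Submodule.span_induction with
      | mem u hu =>
        obtain ⟨m, rfl⟩ := hu
        rw [orthonormal_iff_ite.mp e.orthonormal]
        have : ¬ (2 * m + 1 = 2 * n) := by omega
        simp [this]
      | zero => simp
      | add u v _ _ h1 h2 => rw [inner_add_left, h1, h2, add_zero]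
      | smul c u _ h1 => rw [inner_smul_left, h1, mul_zero]
    have h2 : (Submodule.span ℂ (Set.range fun n : ℤ => e (2 * n + 1)))ᗮ ≤ Koddᗮ := by
      conv_rhs => rw [hKodd, ← Submodule.orthogonal_orthogonal_eq_closure]
      exact Submodule.le_orthogonal_orthogonal _
    exact h2 h1
  have horth_e : ∀ n : ℤ, e (2 * n + 1) ∈ Kevᗮ := by
    intro n
    have h1 : e (2 * n + 1) ∈ (Submodule.span ℂ (Set.range fun n : ℤ => e (2 * n)))ᗮ := by
      rw [Submodule.mem_orthogonal]
      intro u hu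
      induction hu using Submodule.span_induction with
      | mem u hu =>
        obtain ⟨m, rfl⟩ := hu
        rw [orthonormal_iff_ite.mp e.orthonormal]
        have : ¬ (2 * m = 2 * n + 1) := by omega
        simp [this]
      | zero => simp
      | add u v _ _ h1 h2 => rw [inner_add_left, h1, h2, add_zero]
      | smul c u _ h1 => rw [inner_smul_left, h1, mul_zero]
    have h2 : (Submodule.span ℂ (Set.range fun n : ℤ => e (2 * n)))ᗮ ≤ Kevᗮ := by
      conv_rhs => rw [hKev, ← Submodule.orthogonal_orthogonal_eq_closure]
      exact Submodule.le_orthogonal_orthogonal _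
    exact h2 h1
  -- shift isometries
  set fsh : HilbertBasis ℤ ℂ H := rieszReindex e (Equiv.subRight (1 : ℤ)) with hfsh
  set fsh' : HilbertBasis ℤ ℂ H := rieszReindex e (Equiv.addRight (1 : ℤ)) with hfsh'
  set V : H ≃ₗᵢ[ℂ] H := e.repr.trans fsh.repr.symm with hVdef
  set V' : H ≃ₗᵢ[ℂ] H := e.repr.trans fsh'.repr.symm with hV'def
  have hV : ∀ j : ℤ, V (e j) = e (j - 1) := by
    intro j
    show fsh.repr.symm (e.repr (e j)) = e (j - 1)
    rw [e.repr_self, fsh.repr_symm_single]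
    rw [hfsh, rieszReindex_apply]
    rfl
  have hV' : ∀ j : ℤ, V' (e j) = e (j + 1) := by
    intro j
    show fsh'.repr.symm (e.repr (e j)) = e (j + 1)
    rw [e.repr_self, fsh'.repr_symm_single]
    rw [hfsh', rieszReindex_apply]
    rfl
  set Vc : H →L[ℂ] H := V.toLinearIsometry.toContinuousLinearMap with hVc
  set V'c : H →L[ℂ] H := V'.toLinearIsometry.toContinuousLinearMap with hV'c
  set Nc : H →L[ℂ] H := Vc ∘L (Kodd.subtypeL ∘L Kodd.orthogonalProjectionOnto) with hNc
  set N'c : H →L[ℂ] H := V'c ∘L (Kev.subtypeL ∘L Kev.orthogonalProjectionOnto) with hN'c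
  have hN0 : ∀ n : ℤ, Nc (e (2 * n)) = 0 := by
    intro n
    rw [hNc]
    simp only [ContinuousLinearMap.comp_apply]
    rw [Submodule.orthogonalProjectionOnto_apply_of_mem_orthogonal (horth_o n)]
    simp
  have hN1 : ∀ n : ℤ, Nc (e (2 * n + 1)) = e (2 * n) := by
    intro n
    rw [hNc]
    simp only [ContinuousLinearMap.comp_apply]
    have h1 : (Kodd.orthogonalProjectionOnto (e (2 * n + 1)) : H) = e (2 * n + 1) :=
      Submodule.starProjection_eq_self_iff.mpr (hmo n)
    rw [Submodule.subtypeL_apply, h1]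
    have h2 : Vc (e (2 * n + 1)) = e (2 * n + 1 - 1) := hV _
    rw [h2]
    norm_num
  have hN'0 : ∀ n : ℤ, N'c (e (2 * n + 1)) = 0 := by
    intro n
    rw [hN'c]
    simp only [ContinuousLinearMap.comp_apply]
    rw [Submodule.orthogonalProjectionOnto_apply_of_mem_orthogonal (horth_e n)]
    simp
  have hN'1 : ∀ n : ℤ, N'c (e (2 * n)) = e (2 * n + 1) := by
    intro n
    rw [hN'c]
    simp only [ContinuousLinearMap.comp_apply]
    have h1 : (Kev.orthogonalProjectionOnto (e (2 * n)) : H) = e (2 * n) :=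
      Submodule.starProjection_eq_self_iff.mpr (hme n)
    rw [Submodule.subtypeL_apply, h1]
    exact hV' _
  have parity : ∀ j : ℤ, (∃ n, j = 2 * n) ∨ (∃ n, j = 2 * n + 1) := by
    intro j
    rcases Int.even_or_odd j with ⟨n, hn⟩ | ⟨n, hn⟩
    · exact Or.inl ⟨n, by omega⟩
    · exact Or.inr ⟨n, by omega⟩
  have hNN : ∀ v, Nc (Nc v) = 0 := by
    intro v
    have h := clm_ext_basis e (f := Nc ∘L Nc) (g := 0) ?_ v
    · simpa using h
    · intro j
      rcases parity j with ⟨n, rfl⟩ | ⟨n, rfl⟩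
      · simp [ContinuousLinearMap.comp_apply, hN0 n]
      · simp [ContinuousLinearMap.comp_apply, hN1 n, hN0 n]
  have hN'N' : ∀ v, N'c (N'c v) = 0 := by
    intro v
    have h := clm_ext_basis e (f := N'c ∘L N'c) (g := 0) ?_ v
    · simpa using h
    · intro j
      rcases parity j with ⟨n, rfl⟩ | ⟨n, rfl⟩
      · simp [ContinuousLinearMap.comp_apply, hN'1 n, hN'0 n]
      · simp [ContinuousLinearMap.comp_apply, hN'0 n]
  set S : H ≃L[ℂ] H := ContinuousLinearEquiv.equivOfInverse (1 - Nc) (1 + Nc)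
    (fun v => by
      simp only [ContinuousLinearMap.sub_apply, ContinuousLinearMap.add_apply,
        ContinuousLinearMap.one_apply, map_sub, hNN]
      abel)
    (fun v => by
      simp only [ContinuousLinearMap.sub_apply, ContinuousLinearMap.add_apply,
        ContinuousLinearMap.one_apply, map_add, hNN]
      abel) with hS
  set S' : H ≃L[ℂ] H := ContinuousLinearEquiv.equivOfInverse (1 + N'c) (1 - N'c)
    (fun v => by
      simp only [ContinuousLinearMap.sub_apply, ContinuousLinearMap.add_apply,
        ContinuousLinearMap.one_apply, map_add, hN'N']
      abel)
    (fun v => by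
      simp only [ContinuousLinearMap.sub_apply, ContinuousLinearMap.add_apply,
        ContinuousLinearMap.one_apply, map_sub, hN'N']
      abel) with hS'
  have hS0 : ∀ n : ℤ, S (e (2 * n)) = e (2 * n) := by
    intro n
    show (1 - Nc) (e (2 * n)) = e (2 * n)
    rw [ContinuousLinearMap.sub_apply, ContinuousLinearMap.one_apply, hN0 n, sub_zero]
  have hS1 : ∀ n : ℤ, S (e (2 * n + 1)) = e (2 * n + 1) - e (2 * n) := by
    intro n
    show (1 - Nc) (e (2 * n + 1)) = e (2 * n + 1) - e (2 * n)
    rw [ContinuousLinearMap.sub_apply, ContinuousLinearMap.one_apply, hN1 n]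
  have hS'0 : ∀ n : ℤ, S' (e (2 * n)) = e (2 * n) + e (2 * n + 1) := by
    intro n
    show (1 + N'c) (e (2 * n)) = e (2 * n) + e (2 * n + 1)
    rw [ContinuousLinearMap.add_apply, ContinuousLinearMap.one_apply, hN'1 n]
  have hS'1 : ∀ n : ℤ, S' (e (2 * n + 1)) = e (2 * n + 1) := by
    intro n
    show (1 + N'c) (e (2 * n + 1)) = e (2 * n + 1)
    rw [ContinuousLinearMap.add_apply, ContinuousLinearMap.one_apply, hN'0 n, add_zero]
  -- the reindexed Hilbert basis and the two equivalences
  set E : HilbertBasis (Fin 2 × ℤ) ℂ H := rieszReindex e finIntEquiv with hE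
  have hEa : ∀ i : Fin 2 × ℤ, E i = e (2 * i.2 + (i.1 : ℤ)) := by
    intro i
    rw [hE, rieszReindex_apply, finIntEquiv_apply]
  set Gz : H ≃L[ℂ] H := S.trans T with hGz
  set Dw : H ≃L[ℂ] H := S'.trans B with hDw
  have hzE : ∀ i, z i = Gz (E i) := by
    rintro ⟨k, n⟩
    have hGza : ∀ v, Gz v = T (S v) := fun v => rfl
    have hE0 : (E ((0 : Fin 2), n) : H) = e (2 * n) := by
      have h := hEa ((0 : Fin 2), n)
      simpa using h
    have hE1 : (E ((1 : Fin 2), n) : H) = e (2 * n + 1) := by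
      have h := hEa ((1 : Fin 2), n)
      simpa using h
    have hk : k = 0 ∨ k = 1 := by
      fin_cases k
      · exact Or.inl rfl
      · exact Or.inr rfl
    rcases hk with rfl | rfl
    · rw [hz]
      show x (2 * n) = Gz (E ((0 : Fin 2), n))
      rw [hGza]
      simp only [hE0, hS0 n]
      exact hx _
    · rw [hz]
      show x (2 * n + 1) - x (2 * n) = Gz (E ((1 : Fin 2), n))
      rw [hGza]
      simp only [hE1, hS1 n, map_sub]
      simp only [hx]
  have hwE : ∀ i, w i = Dw (E i) := by
    rintro ⟨k, n⟩
    have hDwa : ∀ v, Dw v = B (S' v) := fun v => rfl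
    have hE0 : (E ((0 : Fin 2), n) : H) = e (2 * n) := by
      have h := hEa ((0 : Fin 2), n)
      simpa using h
    have hE1 : (E ((1 : Fin 2), n) : H) = e (2 * n + 1) := by
      have h := hEa ((1 : Fin 2), n)
      simpa using h
    have hk : k = 0 ∨ k = 1 := by
      fin_cases k
      · exact Or.inl rfl
      · exact Or.inr rfl
    rcases hk with rfl | rfl
    · rw [hw]
      show y (2 * n) + y (2 * n + 1) = Dw (E ((0 : Fin 2), n))
      rw [hDwa]
      simp only [hE0, hS'0 n, map_add]
      simp only [hBe]
    · rw [hw]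
      show y (2 * n + 1) = Dw (E ((1 : Fin 2), n))
      rw [hDwa]
      simp only [hE1, hS'1 n]
      simp only [hBe]
  -- biorthogonality
  have hbzw : ∀ i j : Fin 2 × ℤ, ⟪z i, w j⟫ = if i = j then (1 : ℂ) else 0 := by
    rintro ⟨k, n⟩ ⟨l, m⟩
    have hk : k = 0 ∨ k = 1 := by
      fin_cases k
      · exact Or.inl rfl
      · exact Or.inr rfl
    have hl : l = 0 ∨ l = 1 := by
      fin_cases l
      · exact Or.inl rfl
      · exact Or.inr rfl
    rw [hz, hw]
    rcases hk with rfl | rfl <;> rcases hl with rfl | rfl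
    · show @inner ℂ _ _ (y (2 * m) + y (2 * m + 1)) (x (2 * n))
        = if ((0 : Fin 2), n) = ((0 : Fin 2), m) then (1 : ℂ) else 0
      by_cases hnm : n = m
      · subst hnm
        have c1 : ¬ ((2 * n : ℤ) = 2 * n + 1) := by omega
        simp [inner_add_left, hb, c1]
      · have c1 : ¬ ((2 * n : ℤ) = 2 * m) := by omega
        have c2 : ¬ ((2 * n : ℤ) = 2 * m + 1) := by omega
        simp [inner_add_left, hb, c1, c2, Prod.ext_iff, hnm]
    · show @inner ℂ _ _ (y (2 * m + 1)) (x (2 * n))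
        = if ((0 : Fin 2), n) = ((1 : Fin 2), m) then (1 : ℂ) else 0
      have c1 : ¬ ((2 * n : ℤ) = 2 * m + 1) := by omega
      simp [hb, c1, Prod.ext_iff]
    · show @inner ℂ _ _ (y (2 * m) + y (2 * m + 1)) (x (2 * n + 1) - x (2 * n))
        = if ((1 : Fin 2), n) = ((0 : Fin 2), m) then (1 : ℂ) else 0
      by_cases hnm : n = m
      · subst hnm
        have c1 : ¬ ((2 * n + 1 : ℤ) = 2 * n) := by omega
        have c2 : ¬ ((2 * n : ℤ) = 2 * n + 1) := by omega
        simp [inner_add_left, inner_sub_right, hb, c1, c2, Prod.ext_iff]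
      · have c1 : ¬ ((2 * n + 1 : ℤ) = 2 * m) := by omega
        have c2 : ¬ ((2 * n : ℤ) = 2 * m) := by omega
        have c3 : ¬ ((2 * n + 1 : ℤ) = 2 * m + 1) := by omega
        have c4 : ¬ ((2 * n : ℤ) = 2 * m + 1) := by omega
        simp [inner_add_left, inner_sub_right, hb, c1, c2, c3, c4, Prod.ext_iff]
    · show @inner ℂ _ _ (y (2 * m + 1)) (x (2 * n + 1) - x (2 * n))
        = if ((1 : Fin 2), n) = ((1 : Fin 2), m) then (1 : ℂ) else 0
      by_cases hnm : n = m
      · subst hnm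
        have c1 : ¬ ((2 * n : ℤ) = 2 * n + 1) := by omega
        simp [inner_sub_right, hb, c1]
      · have c1 : ¬ ((2 * n + 1 : ℤ) = 2 * m + 1) := by omega
        have c2 : ¬ ((2 * n : ℤ) = 2 * m + 1) := by omega
        simp [inner_sub_right, hb, c1, c2, Prod.ext_iff, hnm]
  -- the key operator identity
  set Gzc : H →L[ℂ] H := (Gz : H →L[ℂ] H) with hGzc
  set Dwc : H →L[ℂ] H := (Dw : H →L[ℂ] H) with hDwc
  have hGD : ∀ v, ContinuousLinearMap.adjoint Gzc (Dwc v) = v := by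
    have key : ∀ j, ContinuousLinearMap.adjoint Gzc (Dwc (E j)) = E j := by
      intro j
      apply basis_ext_inner E
      intro i
      rw [ContinuousLinearMap.adjoint_inner_right]
      have h1 : Gzc (E i) = z i := by
        rw [hGzc]
        simp only [ContinuousLinearEquiv.coe_coe]
        exact (hzE i).symm
      have h2 : Dwc (E j) = w j := by
        rw [hDwc]
        simp only [ContinuousLinearEquiv.coe_coe]
        exact (hwE j).symm
      rw [h1, h2, ← inner_conj_symm, hbzw i j, orthonormal_iff_ite.mp E.orthonormal i j,
        apply_ite (starRingEnd ℂ), map_one, map_zero]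
      all_goals try (split_ifs <;> rfl)
    intro v
    have h := clm_ext_basis E (f := (ContinuousLinearMap.adjoint Gzc) ∘L Dwc)
      (g := ContinuousLinearMap.id ℂ H) (fun j => by simpa using key j) v
    simpa using h
  have hGD' : ∀ v, ContinuousLinearMap.adjoint Dwc (Gzc v) = v := by
    have h1 : (ContinuousLinearMap.adjoint Gzc) ∘L Dwc = ContinuousLinearMap.id ℂ H :=
      ContinuousLinearMap.ext hGD
    have h2 := congrArg ContinuousLinearMap.adjoint h1
    rw [ContinuousLinearMap.adjoint_comp, ContinuousLinearMap.adjoint_adjoint,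
      ContinuousLinearMap.adjoint_id] at h2
    exact fun v => ContinuousLinearMap.ext_iff.mp h2 v
  have heng1 : ∀ f, Gz (ContinuousLinearMap.adjoint (Dw : H →L[ℂ] H) f) = f := by
    intro f
    have h0 : Gzc (Gz.symm f) = f := by
      rw [hGzc]
      simp
    have h := hGD' (Gz.symm f)
    rw [h0] at h
    rw [← hDwc, h]
    simp
  have heng2 : ∀ f, Dw (ContinuousLinearMap.adjoint (Gz : H →L[ℂ] H) f) = f := by
    intro f
    have h0 : Dwc (Dw.symm f) = f := by
      rw [hDwc]
      simp
    have h := hGD (Dw.symm f)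
    rw [h0] at h
    rw [← hGzc, h]
    simp
  have hsum1 : ∀ f : H, HasSum (fun i => (@inner ℂ _ _ (w i) f) • z i) f := by
    intro f
    have h := riesz_engine E Gz Dw heng1 f
    have he : (fun i => (@inner ℂ _ _ (Dw (E i)) f) • Gz (E i))
        = fun i => (@inner ℂ _ _ (w i) f) • z i := by
      funext i
      rw [← hzE i, ← hwE i]
    rwa [he] at h
  have hsum2 : ∀ F : H, HasSum (fun i => (@inner ℂ _ _ (z i) F) • w i) F := by
    intro F
    have h := riesz_engine E Dw Gz heng2 F
    have he : (fun i => (@inner ℂ _ _ (Gz (E i)) F) • Dw (E i))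
        = fun i => (@inner ℂ _ _ (z i) F) • w i := by
      funext i
      rw [← hzE i, ← hwE i]
    rwa [he] at h
  have hbzw' : ∀ i j : Fin 2 × ℤ,
      ⟪z i, w j⟫ = @ite ℂ (i = j) (Classical.propDecidable _) (1 : ℂ) 0 := by
    intro i j
    rw [hbzw i j]
    split_ifs <;> rfl
  exact ⟨⟨⟨E, Gz, hzE⟩, ⟨E, Dw, hwE⟩, hbzw', hsum1⟩, hsum2⟩
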